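/- Let ℏ > 0, m ≥ 1, C ∈ M_m(ℂ), and let f(u,v) = exp(−(2/(iℏ)) ∑_{k,l} C_{kl} u_k v_l) on ℂ^{2m}. The ΨDO product series f *_{K₀} f converges pointwise on all of ℂ^{2m} and equals exp((2/(iℏ)) ∑_{k,l} (2C² − 2C)_{kl} u_k v_l); in particular f *_{K₀} f is the constant function 1 if and only if C² = C. -/

import Mathlib

/-- Functions on `ℂ^{2m}`, written as functions of `(u, v)` with `u, v : Fin m → ℂ`. -/
abbrev HolFn (m : ℕ) := (Fin m → ℂ) → (Fin m → ℂ) → ℂ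

/-- Partial derivative `∂_{u_j}`. -/
noncomputable def pdU (m : ℕ) (j : Fin m) (f : HolFn m) : HolFn m :=
  fun u v => fderiv ℂ (fun w => f w v) u (Pi.single j 1)

/-- Partial derivative `∂_{v_j}`. -/
noncomputable def pdV (m : ℕ) (j : Fin m) (f : HolFn m) : HolFn m :=
  fun u v => fderiv ℂ (fun w => f u w) v (Pi.single j 1)

/-- Iterated partial derivatives along a list of indices. -/
noncomputable def iterD (m : ℕ) (pd : Fin m → HolFn m → HolFn m)
    (l : List (Fin m)) (f : HolFn m) : HolFn m :=
  l.foldr pd f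

/-- The `k`-th term of the ΨDO (normal ordered) product series of `f` and `g`
at the point `(u, v)`:
`((iℏ)^k/k!) ∑_{j₁,…,j_k} (∂_{v_{j₁}}⋯∂_{v_{j_k}} f)·(∂_{u_{j₁}}⋯∂_{u_{j_k}} g)`. -/
noncomputable def psidoTerm (ℏ : ℝ) (m : ℕ) (f g : HolFn m)
    (u v : Fin m → ℂ) (k : ℕ) : ℂ :=
  ((Complex.I * ℏ) ^ k / (k.factorial : ℂ)) *
    ∑ j : Fin k → Fin m,
      iterD m (pdV m) (List.ofFn j) f u v * iterD m (pdU m) (List.ofFn j) g u v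

/-- `f(u,v) = exp(−(2/(iℏ)) ∑ C_{kl} u_k v_l)`. -/
noncomputable def gaussC (ℏ : ℝ) (m : ℕ) (C : Matrix (Fin m) (Fin m) ℂ) : HolFn m :=
  fun u v => Complex.exp (-(2 / (Complex.I * ℏ)) * ∑ k, ∑ l, C k l * u k * v l)

/-- derivative of `exp` of a linear functional. -/
lemma fderiv_exp_linear {m : ℕ} (b v : Fin m → ℂ) (j : Fin m) :
    fderiv ℂ (fun w : Fin m → ℂ => Complex.exp (∑ l, b l * w l)) v (Pi.single j 1)
      = b j * Complex.exp (∑ l, b l * v l) := by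
  set L : (Fin m → ℂ) →L[ℂ] ℂ := ∑ l, b l • (ContinuousLinearMap.proj l) with hLdef
  have hLapp : ∀ w, L w = ∑ l, b l * w l := by
    intro w
    simp [hLdef, ContinuousLinearMap.sum_apply, ContinuousLinearMap.proj_apply]
  have hL : HasFDerivAt (fun w : Fin m → ℂ => ∑ l, b l * w l) L v := by
    have := L.hasFDerivAt (x := v)
    convert this using 1
    funext w
    exact (hLapp w).symm
  have h : HasFDerivAt (fun w : Fin m → ℂ => Complex.exp (∑ l, b l * w l))
      (Complex.exp (∑ l, b l * v l) • L) v :=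
    (Complex.hasDerivAt_exp (∑ l, b l * v l)).comp_hasFDerivAt_of_eq v hL rfl
  rw [h.fderiv]
  simp [hLapp, Pi.single_apply, Finset.sum_ite_eq', mul_comm]

lemma diff_exp_linear {m : ℕ} (b : Fin m → ℂ) {v : Fin m → ℂ} :
    DifferentiableAt ℂ (fun w : Fin m → ℂ => Complex.exp (∑ l, b l * w l)) v := by
  have hL : Differentiable ℂ (fun w : Fin m → ℂ => ∑ l, b l * w l) := by
    apply Differentiable.fun_sum
    intro i _
    exact (differentiable_const _).mul (differentiable_pi.mp differentiable_id i)
  exact ((Complex.differentiable_exp.comp hL)).differentiableAt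

section Main

variable {m : ℕ} (ℏ : ℝ) (C : Matrix (Fin m) (Fin m) ℂ)

lemma gauss_as_expV (u : Fin m → ℂ) :
    (fun w => gaussC ℏ m C u w)
      = fun w => Complex.exp (∑ l, ((-(2 / (Complex.I * (ℏ:ℂ)))) * ∑ k, C k l * u k) * w l) := by
  funext w
  unfold gaussC
  congr 1
  rw [Finset.sum_comm (f := fun k l => C k l * u k * w l)]
  rw [Finset.mul_sum]
  refine Finset.sum_congr rfl fun l _ => ?_
  simp only [Finset.mul_sum, Finset.sum_mul]
  exact Finset.sum_congr rfl fun k _ => by ring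

lemma gauss_as_expU (v : Fin m → ℂ) :
    (fun w => gaussC ℏ m C w v)
      = fun w => Complex.exp (∑ k, ((-(2 / (Complex.I * (ℏ:ℂ)))) * ∑ l, C k l * v l) * w k) := by
  funext w
  unfold gaussC
  congr 1
  rw [Finset.mul_sum]
  refine Finset.sum_congr rfl fun k _ => ?_
  simp only [Finset.mul_sum, Finset.sum_mul]
  exact Finset.sum_congr rfl fun l _ => by ring

lemma iterV_gauss (l : List (Fin m)) :
    iterD m (pdV m) l (gaussC ℏ m C)
      = fun u v => (l.map fun j => (-(2 / (Complex.I * (ℏ:ℂ)))) * ∑ k, C k j * u k).prod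
          * gaussC ℏ m C u v := by
  induction l with
  | nil => funext u v; simp [iterD]
  | cons j l ih =>
    have h0 : iterD m (pdV m) (j :: l) (gaussC ℏ m C)
        = pdV m j (iterD m (pdV m) l (gaussC ℏ m C)) := rfl
    rw [h0, ih]
    funext u v
    unfold pdV
    have h1 : (fun w => (l.map fun j => (-(2 / (Complex.I * (ℏ:ℂ)))) * ∑ k, C k j * u k).prod
        * gaussC ℏ m C u w)
        = fun w => (l.map fun j => (-(2 / (Complex.I * (ℏ:ℂ)))) * ∑ k, C k j * u k).prod
          * Complex.exp (∑ l', ((-(2 / (Complex.I * (ℏ:ℂ)))) * ∑ k, C k l' * u k) * w l') := by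
      funext w
      rw [congrFun (gauss_as_expV ℏ C u) w]
    rw [h1, fderiv_const_mul (diff_exp_linear _)]
    rw [ContinuousLinearMap.smul_apply, fderiv_exp_linear, smul_eq_mul]
    rw [congrFun (gauss_as_expV ℏ C u) v]
    simp only [List.map_cons, List.prod_cons]
    ring

lemma iterU_gauss (l : List (Fin m)) :
    iterD m (pdU m) l (gaussC ℏ m C)
      = fun u v => (l.map fun j => (-(2 / (Complex.I * (ℏ:ℂ)))) * ∑ l', C j l' * v l').prod
          * gaussC ℏ m C u v := by
  induction l with
  | nil => funext u v; simp [iterD]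
  | cons j l ih =>
    have h0 : iterD m (pdU m) (j :: l) (gaussC ℏ m C)
        = pdU m j (iterD m (pdU m) l (gaussC ℏ m C)) := rfl
    rw [h0, ih]
    funext u v
    unfold pdU
    have h1 : (fun w => (l.map fun j => (-(2 / (Complex.I * (ℏ:ℂ)))) * ∑ l', C j l' * v l').prod
        * gaussC ℏ m C w v)
        = fun w => (l.map fun j => (-(2 / (Complex.I * (ℏ:ℂ)))) * ∑ l', C j l' * v l').prod
          * Complex.exp (∑ k, ((-(2 / (Complex.I * (ℏ:ℂ)))) * ∑ l', C k l' * v l') * w k) := by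
      funext w
      rw [congrFun (gauss_as_expU ℏ C v) w]
    rw [h1, fderiv_const_mul (diff_exp_linear _)]
    rw [ContinuousLinearMap.smul_apply, fderiv_exp_linear, smul_eq_mul]
    rw [congrFun (gauss_as_expU ℏ C v) u]
    simp only [List.map_cons, List.prod_cons]
    ring

lemma sum_mid (u v : Fin m → ℂ) :
    ∑ i, (∑ k, C k i * u k) * (∑ l', C i l' * v l')
      = ∑ k, ∑ l, (C * C) k l * u k * v l :=
  calc ∑ i, (∑ k, C k i * u k) * (∑ l', C i l' * v l')
      = ∑ i, ∑ k, ∑ l', C k i * u k * (C i l' * v l') := by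
        refine Finset.sum_congr rfl fun i _ => ?_
        rw [Finset.sum_mul]
        refine Finset.sum_congr rfl fun k _ => ?_
        rw [Finset.mul_sum]
    _ = ∑ k, ∑ i, ∑ l', C k i * u k * (C i l' * v l') := by rw [Finset.sum_comm]
    _ = ∑ k, ∑ l', ∑ i, C k i * u k * (C i l' * v l') := by
        exact Finset.sum_congr rfl fun k _ => by rw [Finset.sum_comm]
    _ = ∑ k, ∑ l, (C * C) k l * u k * v l := by
        refine Finset.sum_congr rfl fun k _ => Finset.sum_congr rfl fun l _ => ?_
        rw [Matrix.mul_apply, Finset.sum_mul, Finset.sum_mul]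
        exact Finset.sum_congr rfl fun i _ => by ring

end Main

theorem statement1 (ℏ : ℝ) (hℏ : 0 < ℏ) (m : ℕ) (hm : 1 ≤ m)
    (C : Matrix (Fin m) (Fin m) ℂ) :
    (∀ u v : Fin m → ℂ,
      HasSum (psidoTerm ℏ m (gaussC ℏ m C) (gaussC ℏ m C) u v)
        (Complex.exp ((2 / (Complex.I * ℏ)) *
          ∑ k, ∑ l, ((2 : ℂ) • (C * C) - (2 : ℂ) • C) k l * u k * v l))) ∧
    ((∀ u v : Fin m → ℂ,
        Complex.exp ((2 / (Complex.I * ℏ)) *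
          ∑ k, ∑ l, ((2 : ℂ) • (C * C) - (2 : ℂ) • C) k l * u k * v l) = 1)
      ↔ C * C = C) := by
  have hI : (Complex.I * ℏ : ℂ) ≠ 0 :=
    mul_ne_zero Complex.I_ne_zero (by exact_mod_cast hℏ.ne')
  constructor
  · intro u v
    -- the sum of the series
    have hterm : ∀ k, psidoTerm ℏ m (gaussC ℏ m C) (gaussC ℏ m C) u v k
        = (gaussC ℏ m C u v * gaussC ℏ m C u v) *
          (((Complex.I * ℏ) * ∑ i, ((-(2 / (Complex.I * (ℏ:ℂ)))) * ∑ k, C k i * u k)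
              * ((-(2 / (Complex.I * (ℏ:ℂ)))) * ∑ l', C i l' * v l')) ^ k
            / (k.factorial : ℂ)) := by
      intro k
      unfold psidoTerm
      simp only [iterV_gauss, iterU_gauss]
      simp only [List.map_ofFn, List.prod_ofFn, Function.comp]
      have h2 : ∀ j : Fin k → Fin m,
          (∏ t, ((-(2 / (Complex.I * (ℏ:ℂ)))) * ∑ k', C k' (j t) * u k')) * gaussC ℏ m C u v
            * ((∏ t, ((-(2 / (Complex.I * (ℏ:ℂ)))) * ∑ l', C (j t) l' * v l')) * gaussC ℏ m C u v)
          = (gaussC ℏ m C u v * gaussC ℏ m C u v)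
            * ∏ t, (((-(2 / (Complex.I * (ℏ:ℂ)))) * ∑ k', C k' (j t) * u k')
                * ((-(2 / (Complex.I * (ℏ:ℂ)))) * ∑ l', C (j t) l' * v l')) := by
        intro j
        conv_rhs => rw [Finset.prod_mul_distrib]
        ring
      rw [Finset.sum_congr rfl fun j _ => h2 j, ← Finset.mul_sum,
        ← Fintype.sum_pow (fun i => ((-(2 / (Complex.I * (ℏ:ℂ)))) * ∑ k', C k' i * u k')
          * ((-(2 / (Complex.I * (ℏ:ℂ)))) * ∑ l', C i l' * v l')) k]
      rw [mul_pow]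
      ring
    rw [funext hterm]
    have hexp := NormedSpace.expSeries_div_hasSum_exp
      ((Complex.I * ℏ) * ∑ i, ((-(2 / (Complex.I * (ℏ:ℂ)))) * ∑ k, C k i * u k)
        * ((-(2 / (Complex.I * (ℏ:ℂ)))) * ∑ l', C i l' * v l'))
    rw [← Complex.exp_eq_exp_ℂ] at hexp
    have hfin := hexp.mul_left (gaussC ℏ m C u v * gaussC ℏ m C u v)
    have hval : (gaussC ℏ m C u v * gaussC ℏ m C u v) *
        Complex.exp ((Complex.I * ℏ) * ∑ i, ((-(2 / (Complex.I * (ℏ:ℂ)))) * ∑ k, C k i * u k)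
          * ((-(2 / (Complex.I * (ℏ:ℂ)))) * ∑ l', C i l' * v l'))
        = Complex.exp ((2 / (Complex.I * ℏ)) *
            ∑ k, ∑ l, ((2 : ℂ) • (C * C) - (2 : ℂ) • C) k l * u k * v l) := by
      unfold gaussC
      rw [← Complex.exp_add, ← Complex.exp_add]
      congr 1
      have hpull : (∑ i, ((-(2 / (Complex.I * (ℏ:ℂ)))) * ∑ k, C k i * u k)
            * ((-(2 / (Complex.I * (ℏ:ℂ)))) * ∑ l', C i l' * v l'))
          = (2 / (Complex.I * (ℏ:ℂ)))^2
            * ∑ i, (∑ k, C k i * u k) * (∑ l', C i l' * v l') := by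
        rw [Finset.mul_sum]
        exact Finset.sum_congr rfl fun i _ => by ring
      rw [hpull, sum_mid]
      have hT : (∑ k, ∑ l, ((2 : ℂ) • (C * C) - (2 : ℂ) • C) k l * u k * v l)
          = 2 * (∑ k, ∑ l, (C * C) k l * u k * v l)
            - 2 * (∑ k, ∑ l, C k l * u k * v l) := by
        rw [Finset.mul_sum, Finset.mul_sum, ← Finset.sum_sub_distrib]
        refine Finset.sum_congr rfl fun k _ => ?_
        rw [Finset.mul_sum, Finset.mul_sum, ← Finset.sum_sub_distrib]
        refine Finset.sum_congr rfl fun l _ => ?_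
        simp only [Matrix.sub_apply, Matrix.smul_apply, smul_eq_mul]
        ring
      rw [hT]
      field_simp
      ring
    rw [← hval]
    exact hfin
  · constructor
    · intro h
      ext k l
      by_contra hne
      have hMne : ((2 : ℂ) • (C * C) - (2 : ℂ) • C) k l ≠ 0 := by
        simp only [Matrix.sub_apply, Matrix.smul_apply, smul_eq_mul]
        intro h0
        exact hne (mul_left_cancel₀ (two_ne_zero) (sub_eq_zero.mp h0))
      have hcne : (2 / (Complex.I * (ℏ:ℂ))) * ((2 : ℂ) • (C * C) - (2 : ℂ) • C) k l ≠ 0 :=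
        mul_ne_zero (div_ne_zero two_ne_zero hI) hMne
      have key : ∀ t : ℂ, Complex.exp
          ((2 / (Complex.I * (ℏ:ℂ))) * ((2 : ℂ) • (C * C) - (2 : ℂ) • C) k l * t) = 1 := by
        intro t
        have hh := h (Pi.single k t) (Pi.single l 1)
        rw [← hh]
        congr 1
        rw [mul_assoc]
        congr 1
        simp [Pi.single_apply, mul_ite, ite_mul, mul_zero, zero_mul, mul_one,
          Finset.sum_ite_eq', Finset.mem_univ, if_true]
      have hkey := key ((Real.pi * Complex.I) /
        ((2 / (Complex.I * (ℏ:ℂ))) * ((2 : ℂ) • (C * C) - (2 : ℂ) • C) k l))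
      rw [mul_div_cancel₀ _ hcne, Complex.exp_pi_mul_I] at hkey
      norm_num at hkey
    · intro h u v
      have h0 : (2 : ℂ) • (C * C) - (2 : ℂ) • C = 0 := by rw [h]; simp
      simp only [h0, Matrix.zero_apply, zero_mul, Finset.sum_const_zero, mul_zero,
        Complex.exp_zero]
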